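/- For every integer m and real x, the series ∑_{n∈ℤ} (sin(π(x−n))/(π(x−n)))² converges and equals 1 (where the term at n = x, if x is an integer, is interpreted as 1). -/

import Mathlib

open intervalIntegral in
lemma intExp {c : ℂ} (hc : c ≠ 0) (a b : ℝ) :
    ∫ t in a..b, Complex.exp (c * t) = (Complex.exp (c * b) - Complex.exp (c * a)) / c :=
  integral_exp_mul_complex hc

open Real MeasureTheory Complex AddCircle

noncomputable def sinc (t : ℝ) : ℝ := if t = 0 then 1 else Real.sin (π * t) / (π * t)

theorem sum_sinc_sq (x : ℝ) : HasSum (fun n : ℤ => (_root_.sinc (x - n)) ^ 2) 1 := by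
  haveI : Fact ((0:ℝ) < 1) := ⟨zero_lt_one⟩
  set g : ℝ → ℂ := fun t => Complex.exp ((2 * π * x * t : ℝ) * Complex.I) with hg
  set F : AddCircle (1:ℝ) → ℂ := AddCircle.liftIco 1 0 g with hFdef
  have hgnorm : ∀ t : ℝ, ‖g t‖ = 1 := by
    intro t
    rw [hg]
    rw [Complex.norm_exp_ofReal_mul_I]
  have hFnorm : ∀ z : AddCircle (1:ℝ), ‖F z‖ = 1 := by
    intro z
    rw [hFdef, AddCircle.liftIco, Function.comp_apply, Set.restrict_apply]
    exact hgnorm _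
  have hgm : Measurable g := by
    apply Measurable.cexp
    exact ((Complex.measurable_ofReal.comp (by fun_prop)).mul measurable_const)
  have hFm : Measurable F := by
    rw [hFdef, AddCircle.liftIco, Set.restrict_eq]
    exact (hgm.comp measurable_subtype_coe).comp
      (AddCircle.measurableEquivIco 1 0).measurable
  have hF : MemLp F 2 (@haarAddCircle 1 _) :=
    MemLp.of_bound hFm.aestronglyMeasurable 1 (Filter.Eventually.of_forall fun z => (hFnorm z).le)
  set fL2 : Lp ℂ 2 (@haarAddCircle 1 _) := hF.toLp F with hfL2
  have hae : (fL2 : AddCircle (1:ℝ) → ℂ) =ᵐ[@haarAddCircle 1 _] F := hF.coeFn_toLp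
  have hcoeff : ∀ n : ℤ, fourierCoeff (fL2 : AddCircle (1:ℝ) → ℂ) n = fourierCoeff F n := by
    intro n
    unfold fourierCoeff
    exact integral_congr_ae (hae.mono fun z hz => by dsimp only; rw [hz])
  have hcomp : ∀ n : ℤ, ‖fourierCoeff F n‖ ^ 2 = (_root_.sinc (x - n)) ^ 2 := by
    intro n
    have h1 : fourierCoeff F n = fourierCoeffOn zero_lt_one g n := by
      have := fourierCoeff_liftIco_eq (T := 1) (a := 0) g n
      simp only [zero_add] at this
      exact this
    set c : ℂ := ((2 * π * (x - n) : ℝ) : ℂ) * Complex.I with hc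
    have h2 : fourierCoeffOn zero_lt_one g n = ∫ t in (0:ℝ)..1, Complex.exp (c * t) := by
      rw [fourierCoeffOn_eq_integral]
      norm_num
      apply intervalIntegral.integral_congr
      intro t _
      show (starRingEnd ℂ) (Complex.exp (2*(π:ℂ)*Complex.I*(n:ℂ)*(t:ℂ))) *
        Complex.exp ((2*π*x*t : ℝ)*Complex.I) = Complex.exp (c*(t:ℂ))
      rw [← Complex.exp_conj, ← Complex.exp_add]
      congr 1
      rw [hc]
      push_cast
      simp only [map_mul, Complex.conj_I, Complex.conj_ofReal, map_ofNat, map_intCast]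
      ring
    rcases eq_or_ne (x - (n:ℝ)) 0 with hy | hy
    · rw [h1, h2]
      simp [hc, hy, _root_.sinc]
    · set y : ℝ := x - (n:ℝ) with hydef
      have hπ0 : (π:ℝ) ≠ 0 := Real.pi_ne_zero
      have hπy : π * y ≠ 0 := mul_ne_zero hπ0 hy
      have hcne : c ≠ 0 := by
        rw [hc]
        exact mul_ne_zero (Complex.ofReal_ne_zero.mpr
          (mul_ne_zero (mul_ne_zero two_ne_zero hπ0) hy)) Complex.I_ne_zero
      rw [h1, h2, intExp hcne, Complex.ofReal_one, Complex.ofReal_zero,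
        mul_one, mul_zero, Complex.exp_zero]
      have hre : (Complex.exp c).re = Real.cos (2 * π * y) := by
        rw [hc]; exact Complex.exp_ofReal_mul_I_re _
      have him : (Complex.exp c).im = Real.sin (2 * π * y) := by
        rw [hc]; exact Complex.exp_ofReal_mul_I_im _
      have hnum : ‖Complex.exp c - 1‖ ^ 2 = 4 * Real.sin (π * y) ^ 2 := by
        rw [Complex.sq_norm, Complex.normSq_apply, Complex.sub_re,
          Complex.sub_im, Complex.one_re, Complex.one_im, hre, him]
        have ha := Real.sin_sq_add_cos_sq (2 * π * y)
        have hb : Real.cos (2 * (π * y)) = 2 * Real.cos (π * y) ^ 2 - 1 := Real.cos_two_mul _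
        have hd := Real.sin_sq_add_cos_sq (π * y)
        rw [show 2 * π * y = 2 * (π * y) by ring] at *
        nlinarith
      have hden : ‖c‖ ^ 2 = (2 * π * y) ^ 2 := by
        rw [hc, norm_mul, Complex.norm_real, Real.norm_eq_abs,
          Complex.norm_I, mul_one, _root_.sq_abs]
      rw [norm_div, div_pow, hnum, hden,
        show _root_.sinc y = Real.sin (π * y) / (π * y) from if_neg hy, div_pow]
      rw [div_eq_div_iff (by positivity) (by positivity)]
      ring
  have hsum_eq : ∀ n : ℤ, ‖fourierCoeff (fL2 : AddCircle (1:ℝ) → ℂ) n‖ ^ 2 = (_root_.sinc (x - n)) ^ 2 :=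
    fun n => by rw [hcoeff]; exact hcomp n
  have hsummable : Summable (fun n : ℤ => ‖fourierCoeff (fL2 : AddCircle (1:ℝ) → ℂ) n‖ ^ 2) := by
    have hm := lp.memℓp ((@fourierBasis 1 _).repr fL2)
    have hs := (memℓp_gen_iff (p := 2) (by norm_num)
      (f := ((@fourierBasis 1 _).repr fL2 : ℤ → ℂ))).mp hm
    have h2 : ∀ i : ℤ, ‖((@fourierBasis 1 _).repr fL2) i‖ ^ ((2:ENNReal).toReal) =
        ‖fourierCoeff (fL2 : AddCircle (1:ℝ) → ℂ) i‖ ^ 2 := by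
      intro i
      rw [fourierBasis_repr]
      norm_num
    simpa only [h2] using hs
  have htsum : ∑' n : ℤ, ‖fourierCoeff (fL2 : AddCircle (1:ℝ) → ℂ) n‖ ^ 2 = 1 := by
    rw [tsum_sq_fourierCoeff]
    have heq : ∫ z : AddCircle (1:ℝ), ‖(fL2 : AddCircle (1:ℝ) → ℂ) z‖ ^ 2 ∂haarAddCircle
        = ∫ _ : AddCircle (1:ℝ), (1:ℝ) ∂haarAddCircle := by
      apply integral_congr_ae
      exact hae.mono fun z hz => by dsimp only; rw [hz, hFnorm z]; norm_num
    rw [heq]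
    simp
  have hfin : HasSum (fun n : ℤ => ‖fourierCoeff (fL2 : AddCircle (1:ℝ) → ℂ) n‖ ^ 2) 1 :=
    (Summable.hasSum_iff hsummable).mpr htsum
  simp only [hsum_eq] at hfin
  exact hfin
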